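/- There exists a constant C > 3 with the following property: for all c > 3/2, μ ∈ [0,1], ε ∈ (0,1/4), and all (v,u) ∈ ℂ² with |u|² < ε and |v|² < ε, the Hessian of K_{μ,c}(v,u) = ½|u|² + c|v|² + 2|v|²⟨u,iv⟩ - μ Im(uv) - μ|v|²/|2v²-1| - (1-μ)/2 satisfies, for all (û,v̂) ∈ ℂ², D²K_{μ,c}(v,u)[(û,v̂),(û,v̂)] ≥ |û|² + 2c|v̂|² - Cε(|û|² + |v̂|²) - 2μ|Im(û v̂)| - 2μ|v̂|²/|2v²-1|. -/

import Mathlib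

open Complex

/-- `⟨a, i b⟩ = a₂b₁ - a₁b₂`. -/
def iprod (a b : ℂ) : ℝ := a.im * b.re - a.re * b.im

/-- The regularized Hamiltonian `K_{μ,c}` in Levi-Civita coordinates `(v,u)`. -/
noncomputable def Kreg (μ c : ℝ) : ℂ × ℂ → ℝ :=
  fun p => (1 / 2) * ‖p.2‖ ^ 2 + c * ‖p.1‖ ^ 2 + 2 * ‖p.1‖ ^ 2 * iprod p.2 p.1
    - μ * (p.2 * p.1).im - μ * ‖p.1‖ ^ 2 / ‖2 * p.1 ^ 2 - 1‖ - (1 - μ) / 2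

namespace HLB

noncomputable def CA : ℂ × ℂ →L[ℝ] ℝ := Complex.reCLM.comp (ContinuousLinearMap.fst ℝ ℂ ℂ)
noncomputable def CB : ℂ × ℂ →L[ℝ] ℝ := Complex.imCLM.comp (ContinuousLinearMap.fst ℝ ℂ ℂ)
noncomputable def CX : ℂ × ℂ →L[ℝ] ℝ := Complex.reCLM.comp (ContinuousLinearMap.snd ℝ ℂ ℂ)
noncomputable def CY : ℂ × ℂ →L[ℝ] ℝ := Complex.imCLM.comp (ContinuousLinearMap.snd ℝ ℂ ℂ)

@[simp] lemma CA_apply (p : ℂ × ℂ) : CA p = p.1.re := rfl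
@[simp] lemma CB_apply (p : ℂ × ℂ) : CB p = p.1.im := rfl
@[simp] lemma CX_apply (p : ℂ × ℂ) : CX p = p.2.re := rfl
@[simp] lemma CY_apply (p : ℂ × ℂ) : CY p = p.2.im := rfl

def qf (p : ℂ × ℂ) : ℝ :=
  4 * (p.1.re ^ 2 + p.1.im ^ 2) ^ 2 - 4 * p.1.re ^ 2 + 4 * p.1.im ^ 2 + 1

noncomputable def rf (p : ℂ × ℂ) : ℝ := Real.sqrt (qf p)

lemma rf_pos {p : ℂ × ℂ} (hq : 0 < qf p) : 0 < rf p := Real.sqrt_pos.2 hq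

lemma rf_sq {p : ℂ × ℂ} (hq : 0 < qf p) : rf p ^ 2 = qf p := Real.sq_sqrt hq.le

lemma hasA (p : ℂ × ℂ) : HasFDerivAt (fun p : ℂ × ℂ => p.1.re) CA p := CA.hasFDerivAt
lemma hasB (p : ℂ × ℂ) : HasFDerivAt (fun p : ℂ × ℂ => p.1.im) CB p := CB.hasFDerivAt
lemma hasX (p : ℂ × ℂ) : HasFDerivAt (fun p : ℂ × ℂ => p.2.re) CX p := CX.hasFDerivAt
lemma hasY (p : ℂ × ℂ) : HasFDerivAt (fun p : ℂ × ℂ => p.2.im) CY p := CY.hasFDerivAt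

lemma sq2 {f : ℂ × ℂ → ℝ} {f' : ℂ × ℂ →L[ℝ] ℝ} {p : ℂ × ℂ} (h : HasFDerivAt f f' p) :
    HasFDerivAt (fun p => f p ^ 2) ((2 * f p) • f') p := by
  simpa [Function.comp_def] using (hasDerivAt_pow 2 (f p)).comp_hasFDerivAt p h

lemma hasS (p : ℂ × ℂ) :
    HasFDerivAt (fun p : ℂ × ℂ => p.1.re ^ 2 + p.1.im ^ 2)
      ((2 * p.1.re) • CA + (2 * p.1.im) • CB) p :=
  (sq2 (hasA p)).add (sq2 (hasB p))

lemma hasQf (p : ℂ × ℂ) :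
    HasFDerivAt qf
      ((8 * p.1.re * (2 * (p.1.re ^ 2 + p.1.im ^ 2) - 1)) • CA +
       (8 * p.1.im * (2 * (p.1.re ^ 2 + p.1.im ^ 2) + 1)) • CB) p := by
  have h := ((((sq2 (hasS p)).const_mul (4:ℝ)).sub ((sq2 (hasA p)).const_mul (4:ℝ))).add
      ((sq2 (hasB p)).const_mul (4:ℝ))).add_const (1:ℝ)
  exact h.congr_fderiv (by ext w <;> simp <;> ring)

/-- derivative of `p ↦ (rf p)⁻¹`. -/
lemma hasRinv {p : ℂ × ℂ} (hq : 0 < qf p) :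
    HasFDerivAt (fun p => (rf p)⁻¹)
      ((-(4 * p.1.re * (2 * (p.1.re ^ 2 + p.1.im ^ 2) - 1)) * ((rf p) ^ 3)⁻¹) • CA +
       (-(4 * p.1.im * (2 * (p.1.re ^ 2 + p.1.im ^ 2) + 1)) * ((rf p) ^ 3)⁻¹) • CB) p := by
  have hr := rf_pos hq
  have h1 : HasDerivAt (fun t : ℝ => (Real.sqrt t)⁻¹)
      (-(1 / (2 * Real.sqrt (qf p))) / (Real.sqrt (qf p)) ^ 2) (qf p) :=
    (Real.hasDerivAt_sqrt hq.ne').inv hr.ne'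
  have h := h1.comp_hasFDerivAt p (hasQf p)
  refine h.congr_fderiv ?_
  have hs : Real.sqrt (qf p) ^ 2 = qf p := Real.sq_sqrt hq.le
  have hp : 0 < Real.sqrt (qf p) := Real.sqrt_pos.2 hq
  ext w
  all_goals simp [rf]
  all_goals
    generalize hgen : Real.sqrt (qf p) = R at hs hp ⊢
    try rw [← hs]
    field_simp
    ring

/-- derivative of `p ↦ ((rf p)^3)⁻¹`. -/
lemma hasR3inv {p : ℂ × ℂ} (hq : 0 < qf p) :
    HasFDerivAt (fun p => ((rf p) ^ 3)⁻¹)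
      ((-(12 * p.1.re * (2 * (p.1.re ^ 2 + p.1.im ^ 2) - 1)) * ((rf p) ^ 5)⁻¹) • CA +
       (-(12 * p.1.im * (2 * (p.1.re ^ 2 + p.1.im ^ 2) + 1)) * ((rf p) ^ 5)⁻¹) • CB) p := by
  have hr := rf_pos hq
  have h1 : HasDerivAt (fun t : ℝ => ((Real.sqrt t) ^ 3)⁻¹)
      (-((3:ℕ) * Real.sqrt (qf p) ^ 2 * (1 / (2 * Real.sqrt (qf p)))) / ((Real.sqrt (qf p)) ^ 3) ^ 2)
      (qf p) :=
    ((Real.hasDerivAt_sqrt hq.ne').pow 3).inv (pow_pos (Real.sqrt_pos.2 hq) 3).ne'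
  have h := h1.comp_hasFDerivAt p (hasQf p)
  refine h.congr_fderiv ?_
  have hs : Real.sqrt (qf p) ^ 2 = qf p := Real.sq_sqrt hq.le
  have hp : 0 < Real.sqrt (qf p) := Real.sqrt_pos.2 hq
  ext w
  all_goals simp [rf]
  all_goals
    generalize hgen : Real.sqrt (qf p) = R at hs hp ⊢
    try rw [← hs]
    field_simp
    ring

lemma norm_sq_c (z : ℂ) : ‖z‖ ^ 2 = z.re ^ 2 + z.im ^ 2 := by
  rw [Complex.sq_norm, Complex.normSq_apply]; ring

lemma norm_2v (p : ℂ × ℂ) : ‖2 * p.1 ^ 2 - 1‖ = rf p := by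
  rw [Complex.norm_def, rf]
  congr 1
  simp [Complex.normSq_apply, qf, pow_two, Complex.mul_re, Complex.mul_im]
  ring

lemma Kreg_eq (μ c : ℝ) : Kreg μ c = fun p : ℂ × ℂ =>
    1 / 2 * (p.2.re ^ 2 + p.2.im ^ 2) + c * (p.1.re ^ 2 + p.1.im ^ 2)
      + 2 * ((p.1.re ^ 2 + p.1.im ^ 2) * (p.2.im * p.1.re - p.2.re * p.1.im))
      - μ * (p.2.re * p.1.im + p.2.im * p.1.re)
      - μ * ((p.1.re ^ 2 + p.1.im ^ 2) * (rf p)⁻¹) - (1 - μ) / 2 := by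
  funext p
  rw [Kreg]
  rw [norm_sq_c, norm_sq_c, norm_2v, iprod, Complex.mul_im, div_eq_mul_inv]
  ring

lemma rinv_eq {p : ℂ × ℂ} (hq : 0 < qf p) : (rf p)⁻¹ = qf p * ((rf p) ^ 3)⁻¹ := by
  have h3 : (rf p) ^ 3 = qf p * rf p := by
    rw [pow_succ, rf_sq hq]
  rw [h3, mul_inv]
  have := (rf_pos hq).ne'
  field_simp

noncomputable def Px (μ : ℝ) (p : ℂ × ℂ) : ℝ :=
  p.2.re - 2 * ((p.1.re ^ 2 + p.1.im ^ 2) * p.1.im) - μ * p.1.im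

noncomputable def Py (μ : ℝ) (p : ℂ × ℂ) : ℝ :=
  p.2.im + 2 * ((p.1.re ^ 2 + p.1.im ^ 2) * p.1.re) - μ * p.1.re

noncomputable def Pa (μ c : ℝ) (p : ℂ × ℂ) : ℝ :=
  2 * c * p.1.re + 4 * (p.1.re * (p.2.im * p.1.re - p.2.re * p.1.im))
    + 2 * ((p.1.re ^ 2 + p.1.im ^ 2) * p.2.im) - μ * p.2.im
    - μ * (2 * p.1.re * (1 - 2 * p.1.re ^ 2 + 6 * p.1.im ^ 2)) * ((rf p) ^ 3)⁻¹

noncomputable def Pb (μ c : ℝ) (p : ℂ × ℂ) : ℝ :=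
  2 * c * p.1.im + 4 * (p.1.im * (p.2.im * p.1.re - p.2.re * p.1.im))
    - 2 * ((p.1.re ^ 2 + p.1.im ^ 2) * p.2.re) - μ * p.2.re
    - μ * (2 * p.1.im * (1 - 6 * p.1.re ^ 2 + 2 * p.1.im ^ 2)) * ((rf p) ^ 3)⁻¹

noncomputable def DK (μ c : ℝ) (p : ℂ × ℂ) : ℂ × ℂ →L[ℝ] ℝ :=
  Px μ p • CX + Py μ p • CY + Pa μ c p • CA + Pb μ c p • CB

lemma hasKreg {μ c : ℝ} {p : ℂ × ℂ} (hq : 0 < qf p) :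
    HasFDerivAt (Kreg μ c) (DK μ c p) p := by
  rw [Kreg_eq μ c]
  have T1 := ((sq2 (hasX p)).add (sq2 (hasY p))).const_mul (1/2 : ℝ)
  have T2 := (hasS p).const_mul c
  have T3 := ((hasS p).mul (((hasY p).mul (hasA p)).sub ((hasX p).mul (hasB p)))).const_mul (2:ℝ)
  have T4 := (((hasX p).mul (hasB p)).add ((hasY p).mul (hasA p))).const_mul μ
  have T5 := ((hasS p).mul (hasRinv hq)).const_mul μ
  have h := ((((T1.add T2).add T3).sub T4).sub T5).sub_const ((1 - μ)/2)
  refine h.congr_fderiv ?_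
  rw [rinv_eq hq]
  refine ContinuousLinearMap.ext fun w => ?_
  simp only [DK, Px, Py, Pa, Pb, qf, ContinuousLinearMap.add_apply,
    ContinuousLinearMap.sub_apply, ContinuousLinearMap.coe_smul', Pi.smul_apply,
    ContinuousLinearMap.smul_apply, smul_eq_mul, CA_apply, CB_apply, CX_apply, CY_apply,
    nsmul_eq_mul, Nat.cast_ofNat, Pi.mul_apply, Pi.sub_apply, Pi.add_apply]
  ring

noncomputable def gaa (p : ℂ × ℂ) : ℝ :=
  (2 - 12 * p.1.re ^ 2 + 12 * p.1.im ^ 2) * ((rf p) ^ 3)⁻¹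
    - 24 * p.1.re ^ 2 * (1 - 2 * p.1.re ^ 2 + 6 * p.1.im ^ 2)
      * (2 * (p.1.re ^ 2 + p.1.im ^ 2) - 1) * ((rf p) ^ 5)⁻¹

noncomputable def gbb (p : ℂ × ℂ) : ℝ :=
  (2 - 12 * p.1.re ^ 2 + 12 * p.1.im ^ 2) * ((rf p) ^ 3)⁻¹
    - 24 * p.1.im ^ 2 * (1 - 6 * p.1.re ^ 2 + 2 * p.1.im ^ 2)
      * (2 * (p.1.re ^ 2 + p.1.im ^ 2) + 1) * ((rf p) ^ 5)⁻¹

noncomputable def gab (p : ℂ × ℂ) : ℝ :=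
  24 * p.1.re * p.1.im * ((rf p) ^ 3)⁻¹
    - 24 * p.1.re * p.1.im * (1 - 2 * p.1.re ^ 2 + 6 * p.1.im ^ 2)
      * (2 * (p.1.re ^ 2 + p.1.im ^ 2) + 1) * ((rf p) ^ 5)⁻¹

noncomputable def gba (p : ℂ × ℂ) : ℝ :=
  -(24 * p.1.re * p.1.im) * ((rf p) ^ 3)⁻¹
    - 24 * p.1.re * p.1.im * (1 - 6 * p.1.re ^ 2 + 2 * p.1.im ^ 2)
      * (2 * (p.1.re ^ 2 + p.1.im ^ 2) - 1) * ((rf p) ^ 5)⁻¹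

noncomputable def Kaa (μ c : ℝ) (p : ℂ × ℂ) : ℝ :=
  2 * c + 4 * (p.2.im * p.1.re - p.2.re * p.1.im) + 8 * p.1.re * p.2.im - μ * gaa p

noncomputable def Kbb (μ c : ℝ) (p : ℂ × ℂ) : ℝ :=
  2 * c + 4 * (p.2.im * p.1.re - p.2.re * p.1.im) - 8 * p.1.im * p.2.re - μ * gbb p

noncomputable def Kab (μ : ℝ) (p : ℂ × ℂ) : ℝ :=
  4 * p.1.im * p.2.im - 4 * p.1.re * p.2.re - μ * gab p

noncomputable def Kba (μ : ℝ) (p : ℂ × ℂ) : ℝ :=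
  4 * p.1.im * p.2.im - 4 * p.1.re * p.2.re - μ * gba p

noncomputable def DPx (μ : ℝ) (p : ℂ × ℂ) : ℂ × ℂ →L[ℝ] ℝ :=
  (-(4 * p.1.re * p.1.im)) • CA
    + (-(2 * (p.1.re ^ 2 + p.1.im ^ 2)) - 4 * p.1.im ^ 2 - μ) • CB + CX

noncomputable def DPy (μ : ℝ) (p : ℂ × ℂ) : ℂ × ℂ →L[ℝ] ℝ :=
  (2 * (p.1.re ^ 2 + p.1.im ^ 2) + 4 * p.1.re ^ 2 - μ) • CA
    + (4 * p.1.re * p.1.im) • CB + CY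

noncomputable def DPa (μ c : ℝ) (p : ℂ × ℂ) : ℂ × ℂ →L[ℝ] ℝ :=
  Kaa μ c p • CA + Kab μ p • CB + (-(4 * p.1.re * p.1.im)) • CX
    + (2 * (p.1.re ^ 2 + p.1.im ^ 2) + 4 * p.1.re ^ 2 - μ) • CY

noncomputable def DPb (μ c : ℝ) (p : ℂ × ℂ) : ℂ × ℂ →L[ℝ] ℝ :=
  Kba μ p • CA + Kbb μ c p • CB
    + (-(2 * (p.1.re ^ 2 + p.1.im ^ 2)) - 4 * p.1.im ^ 2 - μ) • CX
    + (4 * p.1.re * p.1.im) • CY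

noncomputable def D2K (μ c : ℝ) (p : ℂ × ℂ) : ℂ × ℂ →L[ℝ] ℂ × ℂ →L[ℝ] ℝ :=
  (DPx μ p).smulRight CX + (DPy μ p).smulRight CY
    + (DPa μ c p).smulRight CA + (DPb μ c p).smulRight CB

lemma hasPx (μ : ℝ) (p : ℂ × ℂ) : HasFDerivAt (Px μ) (DPx μ p) p := by
  have h := ((hasX p).sub (((hasS p).mul (hasB p)).const_mul (2:ℝ))).sub
    ((hasB p).const_mul μ)
  refine h.congr_fderiv ?_
  refine ContinuousLinearMap.ext fun w => ?_
  simp only [DPx, ContinuousLinearMap.add_apply, ContinuousLinearMap.sub_apply,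
    ContinuousLinearMap.coe_smul', Pi.smul_apply, ContinuousLinearMap.smul_apply,
    smul_eq_mul, CA_apply, CB_apply, CX_apply, CY_apply]
  ring

lemma hasPy (μ : ℝ) (p : ℂ × ℂ) : HasFDerivAt (Py μ) (DPy μ p) p := by
  have h := ((hasY p).add (((hasS p).mul (hasA p)).const_mul (2:ℝ))).sub
    ((hasA p).const_mul μ)
  refine h.congr_fderiv ?_
  refine ContinuousLinearMap.ext fun w => ?_
  simp only [DPy, ContinuousLinearMap.add_apply, ContinuousLinearMap.sub_apply,
    ContinuousLinearMap.coe_smul', Pi.smul_apply, ContinuousLinearMap.smul_apply,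
    smul_eq_mul, CA_apply, CB_apply, CX_apply, CY_apply]
  ring

lemma hasPa {μ c : ℝ} {p : ℂ × ℂ} (hq : 0 < qf p) :
    HasFDerivAt (Pa μ c) (DPa μ c p) p := by
  have hm : HasFDerivAt (fun p : ℂ × ℂ => 1 - 2 * p.1.re ^ 2 + 6 * p.1.im ^ 2)
      ((-(4 * p.1.re)) • CA + (12 * p.1.im) • CB) p := by
    have h := (((sq2 (hasA p)).const_mul (2:ℝ)).const_sub (1:ℝ)).add
      ((sq2 (hasB p)).const_mul (6:ℝ))
    refine h.congr_fderiv ?_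
    refine ContinuousLinearMap.ext fun w => ?_
    simp only [ContinuousLinearMap.add_apply, ContinuousLinearMap.sub_apply,
      ContinuousLinearMap.neg_apply, ContinuousLinearMap.coe_smul', Pi.smul_apply,
      ContinuousLinearMap.smul_apply, smul_eq_mul, CA_apply, CB_apply]
    ring
  have U1 := (hasA p).const_mul (2 * c)
  have U2 := ((hasA p).mul (((hasY p).mul (hasA p)).sub ((hasX p).mul (hasB p)))).const_mul (4:ℝ)
  have U3 := ((hasS p).mul (hasY p)).const_mul (2:ℝ)
  have U4 := (hasY p).const_mul μ
  have U5 := ((((hasA p).const_mul (2:ℝ)).mul hm).const_mul μ).mul (hasR3inv hq)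
  have h := (((U1.add U2).add U3).sub U4).sub U5
  refine h.congr_fderiv ?_
  refine ContinuousLinearMap.ext fun w => ?_
  simp only [DPa, Kaa, Kab, gaa, gab, ContinuousLinearMap.add_apply, Pi.mul_apply, Pi.sub_apply, Pi.add_apply,
    ContinuousLinearMap.sub_apply, ContinuousLinearMap.coe_smul', Pi.smul_apply,
    ContinuousLinearMap.smul_apply, smul_eq_mul, CA_apply, CB_apply, CX_apply, CY_apply]
  ring

lemma hasPb {μ c : ℝ} {p : ℂ × ℂ} (hq : 0 < qf p) :
    HasFDerivAt (Pb μ c) (DPb μ c p) p := by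
  have hn : HasFDerivAt (fun p : ℂ × ℂ => 1 - 6 * p.1.re ^ 2 + 2 * p.1.im ^ 2)
      ((-(12 * p.1.re)) • CA + (4 * p.1.im) • CB) p := by
    have h := (((sq2 (hasA p)).const_mul (6:ℝ)).const_sub (1:ℝ)).add
      ((sq2 (hasB p)).const_mul (2:ℝ))
    refine h.congr_fderiv ?_
    refine ContinuousLinearMap.ext fun w => ?_
    simp only [ContinuousLinearMap.add_apply, ContinuousLinearMap.sub_apply,
      ContinuousLinearMap.neg_apply, ContinuousLinearMap.coe_smul', Pi.smul_apply,
      ContinuousLinearMap.smul_apply, smul_eq_mul, CA_apply, CB_apply]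
    ring
  have U1 := (hasB p).const_mul (2 * c)
  have U2 := ((hasB p).mul (((hasY p).mul (hasA p)).sub ((hasX p).mul (hasB p)))).const_mul (4:ℝ)
  have U3 := ((hasS p).mul (hasX p)).const_mul (2:ℝ)
  have U4 := (hasX p).const_mul μ
  have U5 := ((((hasB p).const_mul (2:ℝ)).mul hn).const_mul μ).mul (hasR3inv hq)
  have h := (((U1.add U2).sub U3).sub U4).sub U5
  refine h.congr_fderiv ?_
  refine ContinuousLinearMap.ext fun w => ?_
  simp only [DPb, Kba, Kbb, gba, gbb, ContinuousLinearMap.add_apply, Pi.mul_apply, Pi.sub_apply, Pi.add_apply,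
    ContinuousLinearMap.sub_apply, ContinuousLinearMap.coe_smul', Pi.smul_apply,
    ContinuousLinearMap.smul_apply, smul_eq_mul, CA_apply, CB_apply, CX_apply, CY_apply]
  ring

lemma hasDK {μ c : ℝ} {p : ℂ × ℂ} (hq : 0 < qf p) :
    HasFDerivAt (DK μ c) (D2K μ c p) p :=
  (((((hasPx μ p).smul_const CX).add ((hasPy μ p).smul_const CY)).add
    ((hasPa hq).smul_const CA)).add ((hasPb hq).smul_const CB))

lemma qf_pos' {p : ℂ × ℂ} {ε : ℝ} (hsε : p.1.re ^ 2 + p.1.im ^ 2 < ε) (hε2 : ε < 1/4) :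
    1/4 < qf p := by
  have h1 : 1 - 2 * (p.1.re ^ 2 + p.1.im ^ 2) > 1/2 := by nlinarith [sq_nonneg p.1.re, sq_nonneg p.1.im]
  have : qf p = (1 - 2*(p.1.re^2+p.1.im^2))^2 + 8*p.1.im^2 := by rw [qf]; ring
  nlinarith [sq_nonneg p.1.im]

lemma qf_pos {p : ℂ × ℂ} {ε : ℝ} (hsε : p.1.re ^ 2 + p.1.im ^ 2 < ε) (hε2 : ε < 1/4) :
    0 < qf p := by linarith [qf_pos' hsε hε2]

lemma rf_half {p : ℂ × ℂ} {ε : ℝ} (hsε : p.1.re ^ 2 + p.1.im ^ 2 < ε) (hε2 : ε < 1/4) :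
    1/2 < rf p := by
  have hq := qf_pos hsε hε2
  have h2 := rf_sq hq
  have h0 := (rf_pos hq).le
  nlinarith [qf_pos' hsε hε2]

lemma rf5 {p : ℂ × ℂ} {ε : ℝ} (hsε : p.1.re ^ 2 + p.1.im ^ 2 < ε) (hε2 : ε < 1/4) :
    1/32 < rf p ^ 5 := by
  have h := rf_half hsε hε2
  have h2 : rf p ^ 2 > 1/4 := by nlinarith
  have h4 : rf p ^ 4 > 1/16 := by nlinarith
  nlinarith


private lemma poly1 (α β ε : ℝ) (hA : 0 ≤ α) (hB : 0 ≤ β) (hs : α + β < ε) (he2 : ε < 1/4) :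
    (2 - 12*α + 12*β) * (4*(α+β)^2 - 4*α + 4*β + 1)
      - 24*α*(1 - 2*α + 6*β)*(2*(α+β) - 1)
      - 2*(4*(α+β)^2 - 4*α + 4*β + 1)^2 ≤ 62 * ε := by
  nlinarith [sq_nonneg (α+β), sq_nonneg (α-β), mul_nonneg hA hB, sq_nonneg (α*β),
    mul_nonneg (mul_nonneg hA hA) hB, mul_nonneg (mul_nonneg hA hB) hB,
    mul_nonneg hA (sq_nonneg (α+β)), mul_nonneg hB (sq_nonneg (α+β)),
    mul_nonneg hA (sq_nonneg (α-β)), mul_nonneg hB (sq_nonneg (α-β))]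

private lemma poly2 (α β ε : ℝ) (hA : 0 ≤ α) (hB : 0 ≤ β) (hs : α + β < ε) (he2 : ε < 1/4) :
    (2 - 12*α + 12*β) * (4*(α+β)^2 - 4*α + 4*β + 1)
      - 24*β*(1 - 6*α + 2*β)*(2*(α+β) + 1)
      - 2*(4*(α+β)^2 - 4*α + 4*β + 1)^2 ≤ 62 * ε := by
  nlinarith [sq_nonneg (α+β), sq_nonneg (α-β), mul_nonneg hA hB, sq_nonneg (α*β),
    mul_nonneg (mul_nonneg hA hA) hB, mul_nonneg (mul_nonneg hA hB) hB,
    mul_nonneg hA (sq_nonneg (α+β)), mul_nonneg hB (sq_nonneg (α+β)),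
    mul_nonneg hA (sq_nonneg (α-β)), mul_nonneg hB (sq_nonneg (α-β))]

private lemma poly3 (a b ε : ℝ) (hs : a^2 + b^2 < ε) (he1 : 0 < ε) (he2 : ε < 1/4) :
    |(-(24*a*b) * ((1 - 2*a^2 + 6*b^2)*(2*(a^2+b^2) + 1)
      + (1 - 6*a^2 + 2*b^2)*(2*(a^2+b^2) - 1)))| ≤ 62 * ε := by
  rw [abs_le]
  constructor
  · nlinarith [sq_nonneg (a+b), sq_nonneg (a-b), sq_nonneg (a*b), sq_nonneg a, sq_nonneg b,
      sq_nonneg (a*(a+b)), sq_nonneg (b*(a+b)), sq_nonneg ((a+b)*(a-b)), sq_nonneg (a*b*(a+b)),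
      mul_nonneg (sq_nonneg a) (sq_nonneg b), sq_nonneg (a^2+b^2)]
  · nlinarith [sq_nonneg (a+b), sq_nonneg (a-b), sq_nonneg (a*b), sq_nonneg a, sq_nonneg b,
      sq_nonneg (a*(a+b)), sq_nonneg (b*(a+b)), sq_nonneg ((a+b)*(a-b)), sq_nonneg (a*b*(a+b)),
      mul_nonneg (sq_nonneg a) (sq_nonneg b), sq_nonneg (a^2+b^2)]

lemma gaa_le {p : ℂ × ℂ} {ε : ℝ} (hsε : p.1.re ^ 2 + p.1.im ^ 2 < ε)
    (hε1 : 0 < ε) (hε2 : ε < 1/4) : gaa p ≤ 2 * (rf p)⁻¹ + 2000 * ε := by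
  have hq := qf_pos hsε hε2
  have hR0 := rf_pos hq
  have hR2 := rf_sq hq
  have h5 := rf5 hsε hε2
  have h5' : (0:ℝ) < rf p ^ 5 := by positivity
  rw [← sub_nonneg]
  have key : 2 * (rf p)⁻¹ + 2000 * ε - gaa p
      = (2 * rf p ^ 4 + 2000 * ε * rf p ^ 5 - ((2 - 12 * p.1.re ^ 2 + 12 * p.1.im ^ 2) * rf p ^ 2
          - 24 * p.1.re ^ 2 * (1 - 2 * p.1.re ^ 2 + 6 * p.1.im ^ 2)
            * (2 * (p.1.re ^ 2 + p.1.im ^ 2) - 1))) * (rf p ^ 5)⁻¹ := by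
    rw [gaa]; field_simp
  rw [key]
  refine mul_nonneg ?_ (by positivity)
  have e2 : rf p ^ 2 = 4 * (p.1.re ^ 2 + p.1.im ^ 2) ^ 2 - 4 * p.1.re ^ 2 + 4 * p.1.im ^ 2 + 1 := by
    rw [hR2]; simp [qf]
  have e4 : rf p ^ 4 = (4 * (p.1.re ^ 2 + p.1.im ^ 2) ^ 2 - 4 * p.1.re ^ 2 + 4 * p.1.im ^ 2 + 1) ^ 2 := by
    rw [show rf p ^ 4 = (rf p ^ 2) ^ 2 from by ring, e2]
  have hpoly := poly1 (p.1.re ^ 2) (p.1.im ^ 2) ε (sq_nonneg _) (sq_nonneg _) hsε hε2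
  have hP : (2 - 12 * p.1.re ^ 2 + 12 * p.1.im ^ 2) * rf p ^ 2
      - 24 * p.1.re ^ 2 * (1 - 2 * p.1.re ^ 2 + 6 * p.1.im ^ 2) * (2 * (p.1.re ^ 2 + p.1.im ^ 2) - 1)
      - 2 * rf p ^ 4 ≤ 62 * ε := by rw [e2, e4]; linarith [hpoly]
  have hε5 : ε * (1/32) < ε * rf p ^ 5 := mul_lt_mul_of_pos_left h5 hε1
  linarith [hP, hε5]

lemma gbb_le {p : ℂ × ℂ} {ε : ℝ} (hsε : p.1.re ^ 2 + p.1.im ^ 2 < ε)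
    (hε1 : 0 < ε) (hε2 : ε < 1/4) : gbb p ≤ 2 * (rf p)⁻¹ + 2000 * ε := by
  have hq := qf_pos hsε hε2
  have hR0 := rf_pos hq
  have hR2 := rf_sq hq
  have h5 := rf5 hsε hε2
  have h5' : (0:ℝ) < rf p ^ 5 := by positivity
  rw [← sub_nonneg]
  have key : 2 * (rf p)⁻¹ + 2000 * ε - gbb p
      = (2 * rf p ^ 4 + 2000 * ε * rf p ^ 5 - ((2 - 12 * p.1.re ^ 2 + 12 * p.1.im ^ 2) * rf p ^ 2
          - 24 * p.1.im ^ 2 * (1 - 6 * p.1.re ^ 2 + 2 * p.1.im ^ 2)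
            * (2 * (p.1.re ^ 2 + p.1.im ^ 2) + 1))) * (rf p ^ 5)⁻¹ := by
    rw [gbb]; field_simp
  rw [key]
  refine mul_nonneg ?_ (by positivity)
  have e2 : rf p ^ 2 = 4 * (p.1.re ^ 2 + p.1.im ^ 2) ^ 2 - 4 * p.1.re ^ 2 + 4 * p.1.im ^ 2 + 1 := by
    rw [hR2]; simp [qf]
  have e4 : rf p ^ 4 = (4 * (p.1.re ^ 2 + p.1.im ^ 2) ^ 2 - 4 * p.1.re ^ 2 + 4 * p.1.im ^ 2 + 1) ^ 2 := by
    rw [show rf p ^ 4 = (rf p ^ 2) ^ 2 from by ring, e2]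
  have hpoly := poly2 (p.1.re ^ 2) (p.1.im ^ 2) ε (sq_nonneg _) (sq_nonneg _) hsε hε2
  have hP : (2 - 12 * p.1.re ^ 2 + 12 * p.1.im ^ 2) * rf p ^ 2
      - 24 * p.1.im ^ 2 * (1 - 6 * p.1.re ^ 2 + 2 * p.1.im ^ 2) * (2 * (p.1.re ^ 2 + p.1.im ^ 2) + 1)
      - 2 * rf p ^ 4 ≤ 62 * ε := by rw [e2, e4]; linarith [hpoly]
  have hε5 : ε * (1/32) < ε * rf p ^ 5 := mul_lt_mul_of_pos_left h5 hε1
  linarith [hP, hε5]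

lemma gsum_eq {p : ℂ × ℂ} : gab p + gba p
    = (-(24 * p.1.re * p.1.im) * ((1 - 2 * p.1.re ^ 2 + 6 * p.1.im ^ 2) * (2 * (p.1.re ^ 2 + p.1.im ^ 2) + 1)
        + (1 - 6 * p.1.re ^ 2 + 2 * p.1.im ^ 2) * (2 * (p.1.re ^ 2 + p.1.im ^ 2) - 1))) * (rf p ^ 5)⁻¹ := by
  rw [gab, gba]; ring

lemma gsum_bounds {p : ℂ × ℂ} {ε : ℝ} (hsε : p.1.re ^ 2 + p.1.im ^ 2 < ε)
    (hε1 : 0 < ε) (hε2 : ε < 1/4) :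
    |gab p + gba p| ≤ 2000 * ε := by
  have hq := qf_pos hsε hε2
  have h5 := rf5 hsε hε2
  have h5' : (0:ℝ) < rf p ^ 5 := by positivity
  have hI0 : (0:ℝ) < (rf p ^ 5)⁻¹ := by positivity
  have hIR : (rf p ^ 5)⁻¹ * rf p ^ 5 = 1 := inv_mul_cancel₀ h5'.ne'
  have hI32 : (rf p ^ 5)⁻¹ < 32 := by nlinarith
  have habs := poly3 p.1.re p.1.im ε hsε hε1 hε2
  rw [gsum_eq, abs_mul, abs_of_pos hI0]
  calc |(-(24 * p.1.re * p.1.im) * ((1 - 2 * p.1.re ^ 2 + 6 * p.1.im ^ 2) * (2 * (p.1.re ^ 2 + p.1.im ^ 2) + 1)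
      + (1 - 6 * p.1.re ^ 2 + 2 * p.1.im ^ 2) * (2 * (p.1.re ^ 2 + p.1.im ^ 2) - 1)))| * (rf p ^ 5)⁻¹
      ≤ (62 * ε) * 32 := by
        apply mul_le_mul habs hI32.le hI0.le (by positivity)
    _ ≤ 2000 * ε := by nlinarith

end HLB

set_option maxHeartbeats 2000000 in
open HLB in
theorem hessian_lower_bound_universal_constant :
    ∃ C : ℝ, 3 < C ∧
      ∀ (c μ ε : ℝ) (v u : ℂ), 3 / 2 < c → μ ∈ Set.Icc (0 : ℝ) 1 →
        ε ∈ Set.Ioo (0 : ℝ) (1 / 4) → ‖u‖ ^ 2 < ε → ‖v‖ ^ 2 < ε →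
        ∀ uh vh : ℂ,
          fderiv ℝ (fderiv ℝ (Kreg μ c)) (v, u) (vh, uh) (vh, uh)
            ≥ ‖uh‖ ^ 2 + 2 * c * ‖vh‖ ^ 2 - C * ε * (‖uh‖ ^ 2 + ‖vh‖ ^ 2)
              - 2 * μ * |(uh * vh).im| - 2 * μ * ‖vh‖ ^ 2 / ‖2 * v ^ 2 - 1‖ := by
  refine ⟨100000, by norm_num, ?_⟩
  intro c μ ε v u hc hμ hε hu2 hv2 uh vh
  obtain ⟨hμ0, hμ1⟩ := hμ
  obtain ⟨hε1, hε2⟩ := hε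
  rw [norm_sq_c] at hu2 hv2
  have hsv : (v, u).1.re ^ 2 + (v, u).1.im ^ 2 < ε := hv2
  have hq : 0 < qf (v, u) := qf_pos hsv hε2
  have hcont : Continuous qf := by unfold qf; fun_prop
  have hmem : {p' : ℂ × ℂ | 0 < qf p'} ∈ nhds (v, u) :=
    (isOpen_lt continuous_const hcont).mem_nhds hq
  have heq : fderiv ℝ (Kreg μ c) =ᶠ[nhds (v, u)] DK μ c := by
    filter_upwards [hmem] with p' hp'
    exact (hasKreg hp').fderiv
  have h2 : fderiv ℝ (fderiv ℝ (Kreg μ c)) (v, u) = D2K μ c (v, u) := by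
    rw [heq.fderiv_eq, (hasDK hq).fderiv]
  rw [ge_iff_le, h2]
  have hval : D2K μ c (v, u) (vh, uh) (vh, uh) =
      (uh.re ^ 2 + uh.im ^ 2) + 2 * c * (vh.re ^ 2 + vh.im ^ 2)
      - 2 * μ * (uh.re * vh.im + uh.im * vh.re)
      + (-(8 * (v.re * v.im)) * (uh.re * vh.re)
         - (4 * (v.re ^ 2 + v.im ^ 2) + 8 * v.im ^ 2) * (uh.re * vh.im)
         + (4 * (v.re ^ 2 + v.im ^ 2) + 8 * v.re ^ 2) * (uh.im * vh.re)
         + 8 * (v.re * v.im) * (uh.im * vh.im))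
      + ((4 * (u.im * v.re - u.re * v.im) + 8 * v.re * u.im) * vh.re ^ 2
         + (4 * (u.im * v.re - u.re * v.im) - 8 * v.im * u.re) * vh.im ^ 2
         + (8 * v.im * u.im - 8 * v.re * u.re) * (vh.re * vh.im))
      - μ * (gaa (v, u) * vh.re ^ 2 + (gab (v, u) + gba (v, u)) * (vh.re * vh.im)
             + gbb (v, u) * vh.im ^ 2) := by
    simp only [D2K, DPx, DPy, DPa, DPb, Kaa, Kab, Kba, Kbb,
      ContinuousLinearMap.add_apply, ContinuousLinearMap.smulRight_apply,
      ContinuousLinearMap.coe_smul', Pi.smul_apply, ContinuousLinearMap.smul_apply,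
      smul_eq_mul, CA_apply, CB_apply, CX_apply, CY_apply]
    ring
  rw [hval, show ‖2 * v ^ 2 - 1‖ = rf (v, u) from norm_2v (v, u), norm_sq_c uh, norm_sq_c vh,
    Complex.mul_im, div_eq_mul_inv]
  clear hval h2 heq hmem hcont hq hc
  -- elementary coordinate bounds
  have hab1 : 2 * (v.re * v.im) < ε := by nlinarith [sq_nonneg (v.re - v.im)]
  have hab2 : -(2 * (v.re * v.im)) < ε := by nlinarith [sq_nonneg (v.re + v.im)]
  have hk1 : (0:ℝ) ≤ 4 * (v.re ^ 2 + v.im ^ 2) + 8 * v.im ^ 2 := by positivity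
  have hk1' : 4 * (v.re ^ 2 + v.im ^ 2) + 8 * v.im ^ 2 < 12 * ε := by nlinarith [sq_nonneg v.re]
  have hk2 : (0:ℝ) ≤ 4 * (v.re ^ 2 + v.im ^ 2) + 8 * v.re ^ 2 := by positivity
  have hk2' : 4 * (v.re ^ 2 + v.im ^ 2) + 8 * v.re ^ 2 < 12 * ε := by nlinarith [sq_nonneg v.im]
  have hya1 : 2 * (u.im * v.re) < 2 * ε := by nlinarith [sq_nonneg (u.im - v.re), sq_nonneg u.re, sq_nonneg v.im]
  have hya2 : -(2 * (u.im * v.re)) < 2 * ε := by nlinarith [sq_nonneg (u.im + v.re), sq_nonneg u.re, sq_nonneg v.im]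
  have hxb1 : 2 * (u.re * v.im) < 2 * ε := by nlinarith [sq_nonneg (u.re - v.im), sq_nonneg u.im, sq_nonneg v.re]
  have hxb2 : -(2 * (u.re * v.im)) < 2 * ε := by nlinarith [sq_nonneg (u.re + v.im), sq_nonneg u.im, sq_nonneg v.re]
  have hby1 : 2 * (v.im * u.im) < 2 * ε := by nlinarith [sq_nonneg (v.im - u.im), sq_nonneg u.re, sq_nonneg v.re]
  have hby2 : -(2 * (v.im * u.im)) < 2 * ε := by nlinarith [sq_nonneg (v.im + u.im), sq_nonneg u.re, sq_nonneg v.re]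
  have hax1 : 2 * (v.re * u.re) < 2 * ε := by nlinarith [sq_nonneg (v.re - u.re), sq_nonneg u.im, sq_nonneg v.im]
  have hax2 : -(2 * (v.re * u.re)) < 2 * ε := by nlinarith [sq_nonneg (v.re + u.re), sq_nonneg u.im, sq_nonneg v.im]
  -- cross term bounds
  have t1 : -(8 * (v.re * v.im)) * (uh.re * vh.re) ≥ -2 * ε * (uh.re ^ 2 + vh.re ^ 2) := by
    nlinarith [hab1, hab2, sq_nonneg (uh.re + vh.re), sq_nonneg (uh.re - vh.re)]
  have t2 : -(4 * (v.re ^ 2 + v.im ^ 2) + 8 * v.im ^ 2) * (uh.re * vh.im)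
      ≥ -6 * ε * (uh.re ^ 2 + vh.im ^ 2) := by
    nlinarith [hk1, hk1', sq_nonneg (uh.re + vh.im), sq_nonneg (uh.re - vh.im),
      sq_nonneg uh.re, sq_nonneg vh.im]
  have t3 : (4 * (v.re ^ 2 + v.im ^ 2) + 8 * v.re ^ 2) * (uh.im * vh.re)
      ≥ -6 * ε * (uh.im ^ 2 + vh.re ^ 2) := by
    nlinarith [hk2, hk2', sq_nonneg (uh.im + vh.re), sq_nonneg (uh.im - vh.re),
      sq_nonneg uh.im, sq_nonneg vh.re]
  have t4 : 8 * (v.re * v.im) * (uh.im * vh.im) ≥ -2 * ε * (uh.im ^ 2 + vh.im ^ 2) := by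
    nlinarith [hab1, hab2, sq_nonneg (uh.im + vh.im), sq_nonneg (uh.im - vh.im)]
  have hc5 : 4 * (u.im * v.re - u.re * v.im) + 8 * v.re * u.im > -16 * ε := by
    nlinarith [hya2, hxb1]
  have t5 : (4 * (u.im * v.re - u.re * v.im) + 8 * v.re * u.im) * vh.re ^ 2
      ≥ -16 * ε * vh.re ^ 2 := by nlinarith [hc5, sq_nonneg vh.re]
  have hc6 : 4 * (u.im * v.re - u.re * v.im) - 8 * v.im * u.re > -16 * ε := by
    nlinarith [hya2, hxb1]
  have t6 : (4 * (u.im * v.re - u.re * v.im) - 8 * v.im * u.re) * vh.im ^ 2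
      ≥ -16 * ε * vh.im ^ 2 := by nlinarith [hc6, sq_nonneg vh.im]
  have hc7a : 8 * v.im * u.im - 8 * v.re * u.re < 16 * ε := by nlinarith [hby1, hax2]
  have hc7b : -(8 * v.im * u.im - 8 * v.re * u.re) < 16 * ε := by nlinarith [hby2, hax1]
  have t7 : (8 * v.im * u.im - 8 * v.re * u.re) * (vh.re * vh.im)
      ≥ -8 * ε * (vh.re ^ 2 + vh.im ^ 2) := by
    nlinarith [hc7a, hc7b, sq_nonneg (vh.re + vh.im), sq_nonneg (vh.re - vh.im)]
  -- the g-matrix bounds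
  have hga := gaa_le hsv hε1 hε2
  have hgb := gbb_le hsv hε1 hε2
  have hgs := gsum_bounds hsv hε1 hε2
  rw [abs_le] at hgs
  have hQG : gaa (v, u) * vh.re ^ 2 + (gab (v, u) + gba (v, u)) * (vh.re * vh.im)
        + gbb (v, u) * vh.im ^ 2
      ≤ 2 * (rf (v, u))⁻¹ * (vh.re ^ 2 + vh.im ^ 2) + 3000 * ε * (vh.re ^ 2 + vh.im ^ 2) := by
    nlinarith [hga, hgb, hgs.1, hgs.2, sq_nonneg vh.re, sq_nonneg vh.im,
      sq_nonneg (vh.re + vh.im), sq_nonneg (vh.re - vh.im), hε1]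
  have hμQG : μ * (gaa (v, u) * vh.re ^ 2 + (gab (v, u) + gba (v, u)) * (vh.re * vh.im)
        + gbb (v, u) * vh.im ^ 2)
      ≤ μ * (2 * (rf (v, u))⁻¹ * (vh.re ^ 2 + vh.im ^ 2))
        + 3000 * ε * (vh.re ^ 2 + vh.im ^ 2) := by
    have h1 := mul_le_mul_of_nonneg_left hQG hμ0
    nlinarith [h1, mul_nonneg (sub_nonneg.2 hμ1)
      (mul_nonneg (by positivity : (0:ℝ) ≤ 3000 * ε)
        (by positivity : (0:ℝ) ≤ vh.re ^ 2 + vh.im ^ 2))]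
  have habs : μ * (uh.re * vh.im + uh.im * vh.re) ≤ μ * |uh.re * vh.im + uh.im * vh.re| :=
    mul_le_mul_of_nonneg_left (le_abs_self _) hμ0
  have hε1' := hε1.le
  linarith [t1, t2, t3, t4, t5, t6, t7, habs, hμQG,
    mul_nonneg hε1' (sq_nonneg uh.re), mul_nonneg hε1' (sq_nonneg uh.im),
    mul_nonneg hε1' (sq_nonneg vh.re), mul_nonneg hε1' (sq_nonneg vh.im)]
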